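/- Suppose the instance (𝒳, ℋ, A, B) follows linear sequence dynamics with the ξ-weighted p-norm for some p ≥ 1, and suppose Σ_{k=0}^∞ ‖A^k‖^p < ∞. If f : ℋ → ℝ is L-Lipschitz continuous, then for every t ≥ 1 the function f̄(x) = f(Σ_{k=0}^{t-1} A^k B x) is Lipschitz continuous on 𝒳 with constant L · (Σ_{k=0}^∞ ‖A^k‖^p)^{1/p}. -/

import Mathlib

/-- For an instance following linear sequence dynamics with the ξ-weighted
`p`-norm (`p ≥ 1`), if `f` is `L`-Lipschitz and `∑ₖ ‖Aᵏ‖^p < ∞`, then for every `t ≥ 1` the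
function `f̄(x) = f (∑_{k<t} Aᵏ B x)` is Lipschitz on `𝒳` with constant
`L ⬝ (∑_{k=0}^∞ ‖Aᵏ‖^p)^{1/p}`.  The linear sequence dynamics structure is encoded by
coordinate maps `coord i : ℋ →ₗ[ℝ] 𝒲` together with the weighted-`p`-norm formula and the
action of `A` and `B` on coordinates. -/
theorem stmt_1
    {W : Type*} [NormedAddCommGroup W] [InnerProductSpace ℝ W] [CompleteSpace W]
    {H : Type*} [NormedAddCommGroup H] [NormedSpace ℝ H] [CompleteSpace H]
    (X : Set W) (hXne : X.Nonempty) (hXclosed : IsClosed X) (hXconvex : Convex ℝ X)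
    (A : H →L[ℝ] H) (B : W →L[ℝ] H) (hB : ‖B‖ ≤ 1)
    (p : ℝ) (hp : 1 ≤ p)
    (xi : ℕ → ℝ) (hxi0 : xi 0 = 1) (hxi : ∀ i, 0 ≤ xi i)
    (coord : ℕ → H →ₗ[ℝ] W) (Aops : ℕ → W →L[ℝ] W)
    (hsummable : ∀ y : H, Summable fun i : ℕ => (xi i * ‖coord i y‖) ^ p)
    (hnorm : ∀ y : H, ‖y‖ = (∑' i : ℕ, (xi i * ‖coord i y‖) ^ p) ^ (1 / p))
    (hA0 : ∀ y : H, coord 0 (A y) = 0)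
    (hAsucc : ∀ (y : H) (i : ℕ), coord (i + 1) (A y) = Aops i (coord i y))
    (hB0 : ∀ x : W, coord 0 (B x) = x)
    (hBsucc : ∀ (x : W) (i : ℕ), coord (i + 1) (B x) = 0)
    (L : ℝ) (hL : 0 ≤ L)
    (hAsum : Summable fun k : ℕ => ‖A ^ k‖ ^ p)
    (f : H → ℝ) (hf : ∀ a b : H, |f a - f b| ≤ L * ‖a - b‖)
    (t : ℕ) (ht : 1 ≤ t) :
    ∀ x ∈ X, ∀ y ∈ X,
      |f (∑ k ∈ Finset.range t, (A ^ k) (B x)) - f (∑ k ∈ Finset.range t, (A ^ k) (B y))|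
        ≤ (L * (∑' k : ℕ, ‖A ^ k‖ ^ p) ^ (1 / p)) * ‖x - y‖ := by

  have hp0 : (0:ℝ) < p := lt_of_lt_of_le one_pos hp
  have hterm_nonneg : ∀ (w : H) (j : ℕ), (0:ℝ) ≤ (xi j * ‖coord j w‖) ^ p :=
    fun w j => Real.rpow_nonneg (mul_nonneg (hxi j) (norm_nonneg _)) p
  have htsum_eq : ∀ w : H, ‖w‖ ^ p = ∑' j : ℕ, (xi j * ‖coord j w‖) ^ p := by
    intro w
    have hnn : (0:ℝ) ≤ ∑' j : ℕ, (xi j * ‖coord j w‖) ^ p :=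
      tsum_nonneg (hterm_nonneg w)
    rw [hnorm w, ← Real.rpow_mul hnn, one_div_mul_cancel hp0.ne', Real.rpow_one]
  have hcoord_le : ∀ (i : ℕ) (w : H), xi i * ‖coord i w‖ ≤ ‖w‖ := by
    intro i w
    have h1 : (xi i * ‖coord i w‖) ^ p ≤ ‖w‖ ^ p := by
      rw [htsum_eq w]
      exact Summable.le_tsum (hsummable w) i (fun j _ => hterm_nonneg w j)
    have h2 := Real.rpow_le_rpow (hterm_nonneg w i) h1 (le_of_lt (one_div_pos.2 hp0))
    rwa [← Real.rpow_mul (mul_nonneg (hxi i) (norm_nonneg _)),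
      ← Real.rpow_mul (norm_nonneg w), mul_one_div_cancel hp0.ne',
      Real.rpow_one, Real.rpow_one] at h2
  have hAk : ∀ (k i : ℕ) (z : W), i ≠ k → coord i ((A ^ k) (B z)) = 0 := by
    intro k
    induction k with
    | zero =>
      intro i z hi
      match i, hi with
      | j + 1, _ => simpa using hBsucc z j
    | succ k ih =>
      intro i z hi
      have hmul : (A ^ (k + 1)) (B z) = A ((A ^ k) (B z)) := by
        rw [pow_succ']; rfl
      rw [hmul]
      match i with
      | 0 => exact hA0 _
      | j + 1 =>
        rw [hAsucc, ih j z (fun h => hi (by rw [h])), map_zero]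
  have hcoordS : ∀ (i : ℕ) (z : W),
      coord i (∑ k ∈ Finset.range t, (A ^ k) (B z)) =
        if i < t then coord i ((A ^ i) (B z)) else 0 := by
    intro i z
    rw [map_sum]
    by_cases hi : i < t
    · rw [if_pos hi]
      exact Finset.sum_eq_single_of_mem i (Finset.mem_range.2 hi)
        (fun k _ hk => hAk k i z (fun h => hk h.symm))
    · rw [if_neg hi]
      exact Finset.sum_eq_zero fun k hk =>
        hAk k i z (fun h => hi (h ▸ Finset.mem_range.1 hk))
  set C : ℝ := ∑' k : ℕ, ‖A ^ k‖ ^ p with hC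
  have hCnn : 0 ≤ C := tsum_nonneg fun k => Real.rpow_nonneg (norm_nonneg _) p
  have hkey : ∀ z : W, ‖∑ k ∈ Finset.range t, (A ^ k) (B z)‖ ≤ C ^ (1 / p) * ‖z‖ := by
    intro z
    set Sz : H := ∑ k ∈ Finset.range t, (A ^ k) (B z) with hSz
    have hbound : ‖Sz‖ ^ p ≤ C * ‖z‖ ^ p := by
      rw [htsum_eq Sz]
      have hzero : ∀ i ∉ Finset.range t, (xi i * ‖coord i Sz‖) ^ p = 0 := by
        intro i hi
        rw [hcoordS i z, if_neg (fun h => hi (Finset.mem_range.2 h))]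
        simp [Real.zero_rpow hp0.ne']
      rw [tsum_eq_sum hzero]
      have hstep : ∀ i ∈ Finset.range t,
          (xi i * ‖coord i Sz‖) ^ p ≤ ‖A ^ i‖ ^ p * ‖z‖ ^ p := by
        intro i hi
        have h1 : xi i * ‖coord i Sz‖ ≤ ‖(A ^ i) (B z)‖ := by
          rw [hcoordS i z, if_pos (Finset.mem_range.1 hi)]
          exact hcoord_le i ((A ^ i) (B z))
        have h2 : ‖(A ^ i) (B z)‖ ≤ ‖A ^ i‖ * ‖z‖ := by
          calc ‖(A ^ i) (B z)‖ ≤ ‖A ^ i‖ * ‖B z‖ := (A ^ i).le_opNorm _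
            _ ≤ ‖A ^ i‖ * (‖B‖ * ‖z‖) :=
              mul_le_mul_of_nonneg_left (B.le_opNorm z) (norm_nonneg _)
            _ ≤ ‖A ^ i‖ * (1 * ‖z‖) :=
              mul_le_mul_of_nonneg_left
                (mul_le_mul_of_nonneg_right hB (norm_nonneg _)) (norm_nonneg _)
            _ = ‖A ^ i‖ * ‖z‖ := by ring
        calc (xi i * ‖coord i Sz‖) ^ p ≤ (‖A ^ i‖ * ‖z‖) ^ p :=
              Real.rpow_le_rpow (mul_nonneg (hxi i) (norm_nonneg _))
                (h1.trans h2) hp0.le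
          _ = ‖A ^ i‖ ^ p * ‖z‖ ^ p := Real.mul_rpow (norm_nonneg _) (norm_nonneg _)
      calc ∑ i ∈ Finset.range t, (xi i * ‖coord i Sz‖) ^ p
          ≤ ∑ i ∈ Finset.range t, ‖A ^ i‖ ^ p * ‖z‖ ^ p := Finset.sum_le_sum hstep
        _ = (∑ i ∈ Finset.range t, ‖A ^ i‖ ^ p) * ‖z‖ ^ p := by
            rw [Finset.sum_mul]
        _ ≤ C * ‖z‖ ^ p := by
            apply mul_le_mul_of_nonneg_right _ (Real.rpow_nonneg (norm_nonneg _) p)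
            exact Summable.sum_le_tsum (Finset.range t)
              (fun k _ => Real.rpow_nonneg (norm_nonneg _) p) hAsum
    have h3 := Real.rpow_le_rpow (Real.rpow_nonneg (norm_nonneg Sz) p) hbound
      (le_of_lt (one_div_pos.2 hp0))
    rwa [← Real.rpow_mul (norm_nonneg Sz), mul_one_div_cancel hp0.ne', Real.rpow_one,
      Real.mul_rpow hCnn (Real.rpow_nonneg (norm_nonneg z) p),
      ← Real.rpow_mul (norm_nonneg z), mul_one_div_cancel hp0.ne', Real.rpow_one] at h3
  intro x _ y _
  have hdiff : (∑ k ∈ Finset.range t, (A ^ k) (B x)) - ∑ k ∈ Finset.range t, (A ^ k) (B y)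
      = ∑ k ∈ Finset.range t, (A ^ k) (B (x - y)) := by
    rw [← Finset.sum_sub_distrib]
    congr 1; ext k
    rw [map_sub, map_sub]
  calc |f (∑ k ∈ Finset.range t, (A ^ k) (B x)) - f (∑ k ∈ Finset.range t, (A ^ k) (B y))|
      ≤ L * ‖(∑ k ∈ Finset.range t, (A ^ k) (B x)) - ∑ k ∈ Finset.range t, (A ^ k) (B y)‖ :=
        hf _ _
    _ = L * ‖∑ k ∈ Finset.range t, (A ^ k) (B (x - y))‖ := by rw [hdiff]
    _ ≤ L * (C ^ (1 / p) * ‖x - y‖) :=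
        mul_le_mul_of_nonneg_left (hkey (x - y)) hL
    _ = (L * C ^ (1 / p)) * ‖x - y‖ := by ring
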